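/- Let R = F[[x,y]]/⟨xy⟩ for a field F, and let 𝔪 = (X, Y) be the maximal ideal generated by the images X, Y of x, y. Then the R-module 𝔪 is not virtually semisimple. -/

import Mathlib

open MvPowerSeries Finsupp

section Aux
variable (F : Type*) [Field F]

local notation "A" => MvPowerSeries (Fin 2) F
local notation "J" => Ideal.span ({MvPowerSeries.X 0 * MvPowerSeries.X 1} : Set (MvPowerSeries (Fin 2) F))

lemma XX_eq : (MvPowerSeries.X 0 * MvPowerSeries.X 1 : A)
    = monomial (single (0:Fin 2) 1 + single 1 1) 1 := by
  rw [X_def, X_def, monomial_mul_monomial, one_mul]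

lemma coeff_eq_zero_of_memJ {h : A} (hh : h ∈ J) {p : Fin 2 →₀ ℕ}
    (hp : ¬ (single (0:Fin 2) 1 + single 1 1 ≤ p)) : coeff p h = 0 := by
  rw [Ideal.mem_span_singleton] at hh
  obtain ⟨k, rfl⟩ := hh
  rw [XX_eq, coeff_monomial_mul, if_neg hp]

lemma not_le_single0 (a : ℕ) :
    ¬ (single (0:Fin 2) 1 + single 1 1 ≤ single (0:Fin 2) a) := by
  intro hle
  have := hle 1
  simp at this

lemma not_le_single1 (b : ℕ) :
    ¬ (single (0:Fin 2) 1 + single 1 1 ≤ single (1:Fin 2) b) := by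
  intro hle
  have := hle 0
  simp at this


-- coefficient of f at single i a, from (X0+X1)*f ∈ J
lemma coeff_single_zero {f : A} (hf : (MvPowerSeries.X 0 + MvPowerSeries.X 1) * f ∈ J) :
    (∀ a, coeff (single (0:Fin 2) a) f = 0) ∧ (∀ b, coeff (single (1:Fin 2) b) f = 0) := by
  constructor
  · intro a
    have h1 : ¬ (single (0:Fin 2) 1 + single 1 1 ≤ single (0:Fin 2) (a+1)) := by
      intro hle; have := hle 1; simp at this
    have h0 := coeff_eq_zero_of_memJ F hf h1
    rw [add_mul, map_add, X_def, X_def, coeff_monomial_mul, coeff_monomial_mul] at h0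
    rw [if_pos, if_neg] at h0
    · simp only [one_mul, add_zero] at h0
      have : single (0:Fin 2) (a+1) - single (0:Fin 2) 1 = single (0:Fin 2) a := by
        ext i; fin_cases i <;> simp
      rwa [this] at h0
    · intro hle; have := hle 1; simp at this
    · intro i; fin_cases i <;> simp
  · intro b
    have h1 : ¬ (single (0:Fin 2) 1 + single 1 1 ≤ single (1:Fin 2) (b+1)) := by
      intro hle; have := hle 0; simp at this
    have h0 := coeff_eq_zero_of_memJ F hf h1
    rw [add_mul, map_add, X_def, X_def, coeff_monomial_mul, coeff_monomial_mul] at h0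
    rw [if_neg, if_pos] at h0
    · simp only [one_mul, zero_add] at h0
      have : single (1:Fin 2) (b+1) - single (1:Fin 2) 1 = single (1:Fin 2) b := by
        ext i; fin_cases i <;> simp
      rwa [this] at h0
    · intro i; fin_cases i <;> simp
    · intro hle; have := hle 0; simp at this

-- X0+X1 regular mod J
lemma regular_mod_J {f : A} (hf : (MvPowerSeries.X 0 + MvPowerSeries.X 1) * f ∈ J) : f ∈ J := by
  obtain ⟨h0, h1⟩ := coeff_single_zero F hf
  rw [Ideal.mem_span_singleton]
  set e : Fin 2 →₀ ℕ := single (0:Fin 2) 1 + single 1 1 with he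
  refine ⟨id (α := A) (fun d => coeff (d + e) f), ?_⟩
  ext n
  rw [XX_eq, coeff_monomial_mul]
  split_ifs with hle
  · have : coeff (n - e) (id (α := A) (fun d => coeff (d + e) f)) = coeff ((n - e) + e) f := rfl
    rw [this, tsub_add_cancel_of_le hle, one_mul]
  · -- n 0 = 0 or n 1 = 0
    rw [Finsupp.le_iff] at hle
    push_neg at hle
    obtain ⟨i, _, hi⟩ := hle
    fin_cases i
    · have hn0 : n 0 = 0 := by simpa [he] using hi
      have : n = single (1:Fin 2) (n 1) := by
        ext j; fin_cases j <;> simp [hn0]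
      rw [this, h1]
    · have hn1 : n 1 = 0 := by simpa [he] using hi
      have : n = single (0:Fin 2) (n 0) := by
        ext j; fin_cases j <;> simp [hn1]
      rw [this, h0]


lemma coeff_mul_deg_one (r G : A) (hG : constantCoeff G = 0) (i : Fin 2) :
    coeff (single i 1) (r * G)
      = constantCoeff r * coeff (single i 1) G := by
  rw [coeff_mul, antidiagonal_single]
  rw [Finset.sum_map]
  rw [show (Finset.HasAntidiagonal.antidiagonal (1:ℕ)) = {(0,1),(1,0)} from rfl]
  rw [Finset.sum_insert (by decide), Finset.sum_singleton]
  simp only [Function.Embedding.coe_prodMap, Function.Embedding.coeFn_mk, Prod.map_apply,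
    Finsupp.single_zero]
  simp [coeff_zero_eq_constantCoeff, hG]


lemma coeff_memJ (h : MvPowerSeries (Fin 2) F) (hh : h ∈ J) (i : Fin 2) :
    coeff (single i 1) h = 0 := by
  rw [Ideal.mem_span_singleton] at hh
  obtain ⟨k, rfl⟩ := hh
  rw [show (MvPowerSeries.X 0 * MvPowerSeries.X 1 : MvPowerSeries (Fin 2) F)
      = monomial (single (0:Fin 2) 1 + single 1 1) 1 from by
    rw [X_def, X_def, monomial_mul_monomial, one_mul]]
  rw [coeff_monomial_mul, if_neg]
  intro hle
  fin_cases i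
  · have := hle 1; simp at this
  · have := hle 0; simp at this

lemma not_principal (G r s : MvPowerSeries (Fin 2) F)
    (hG : G ∈ Ideal.span ({MvPowerSeries.X 0, MvPowerSeries.X 1} : Set (MvPowerSeries (Fin 2) F)))
    (h0 : MvPowerSeries.X 0 - r * G ∈ J) (h1 : MvPowerSeries.X 1 - s * G ∈ J) : False := by
  have hG0 : constantCoeff G = 0 := by
    rw [Ideal.mem_span_pair] at hG
    obtain ⟨a, b, rfl⟩ := hG
    simp
  have key : ∀ (w : MvPowerSeries (Fin 2) F) (i j : Fin 2), MvPowerSeries.X j - w * G ∈ J →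
      coeff (single i 1) (MvPowerSeries.X j)
        = constantCoeff w * coeff (single i 1) G := by
    intro w i j hw
    have := coeff_memJ F _ hw i
    rw [map_sub, coeff_mul_deg_one F w G hG0 i, sub_eq_zero] at this
    exact this
  have e00 := key r 0 0 h0
  have e10 := key r 1 0 h0
  have e01 := key s 0 1 h1
  have e11 := key s 1 1 h1
  rw [coeff_index_single_self_X] at e00 e11
  rw [coeff_index_single_X, if_neg (by decide)] at e10 e01
  set a := constantCoeff r
  set b := constantCoeff s
  set u := coeff (single (0:Fin 2) 1) G
  set v := coeff (single (1:Fin 2) 1) G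
  have hb : b = 0 := by
    have : b * (a * u) = a * (b * u) := by ring
    rw [← e00, ← e01, mul_one, mul_zero] at this
    exact this
  rw [hb, zero_mul] at e11
  exact one_ne_zero e11

end Aux


def VirtuallySemisimple (R : Type*) [Ring R] (M : Type*) [AddCommGroup M] [Module R M] : Prop :=
  ∀ N : Submodule R M, ∃ N' : Submodule R M, (∃ C : Submodule R M, IsCompl N' C) ∧
    Nonempty (N ≃ₗ[R] N')

set_option maxHeartbeats 1000000 in
/-- In `R = F[[x,y]]/⟨xy⟩`, the maximal ideal `𝔪 = (X, Y)` is not virtually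
semisimple as an `R`-module. -/
theorem stmt18 (F : Type*) [Field F] :
    let A := MvPowerSeries (Fin 2) F
    let R := A ⧸ Ideal.span ({MvPowerSeries.X 0 * MvPowerSeries.X 1} : Set A)
    let X : R := Ideal.Quotient.mk _ (MvPowerSeries.X 0)
    let Y : R := Ideal.Quotient.mk _ (MvPowerSeries.X 1)
    let 𝔪 : Ideal R := Ideal.span {X, Y}
    ¬ VirtuallySemisimple R 𝔪 := by
  intro A R X Y 𝔪 hvs
  set J' : Ideal (MvPowerSeries (Fin 2) F) :=
    Ideal.span ({MvPowerSeries.X 0 * MvPowerSeries.X 1} : Set (MvPowerSeries (Fin 2) F)) with hJ'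
  have hX : X ∈ 𝔪 := Ideal.subset_span (by simp)
  have hY : Y ∈ 𝔪 := Ideal.subset_span (by simp)
  have hXYmem : X + Y ∈ 𝔪 := Ideal.add_mem _ hX hY
  set v : 𝔪 := ⟨X + Y, hXYmem⟩ with hv
  -- X + Y is a non-zero-divisor in R
  have hreg : ∀ r : R, r * (X + Y) = 0 → r = 0 := by
    intro r hr
    obtain ⟨f, rfl⟩ := Ideal.Quotient.mk_surjective r
    have hXY : X + Y = Ideal.Quotient.mk J'
        (MvPowerSeries.X 0 + MvPowerSeries.X 1) := by rw [map_add]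
    rw [hXY, ← map_mul, Ideal.Quotient.eq_zero_iff_mem] at hr
    rw [Ideal.Quotient.eq_zero_iff_mem]
    exact regular_mod_J F (by rwa [mul_comm f (MvPowerSeries.X 0 + MvPowerSeries.X 1)] at hr)
  obtain ⟨N', ⟨C, hcompl⟩, ⟨e⟩⟩ := hvs (Submodule.span R {v})
  -- build R ≃ₗ[R] N'
  have hinj : Function.Injective (LinearMap.toSpanSingleton R 𝔪 v) := by
    intro a b hab
    have h0 : (a - b) • v = 0 := by
      rw [show (a - b) • v = a • v - b • v from sub_smul a b v]
      rw [show a • v = LinearMap.toSpanSingleton R 𝔪 v a from rfl,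
        show b • v = LinearMap.toSpanSingleton R 𝔪 v b from rfl, hab, sub_self]
    have h1 : (a - b) * (X + Y) = 0 := congrArg Subtype.val h0
    exact sub_eq_zero.mp (hreg _ h1)
  have φ : R ≃ₗ[R] N' :=
    (LinearEquiv.ofInjective _ hinj).trans
      ((LinearEquiv.ofEq _ _ (LinearMap.span_singleton_eq_range R 𝔪 v).symm).trans e)
  set g' : N' := φ 1 with hg'
  set gR : R := ((g' : 𝔪) : R) with hgR
  have hφ : ∀ r : R, (((φ r : 𝔪) : R)) = r * gR := by
    intro r
    have h1 : φ r = r • g' := by rw [hg', ← φ.map_smul, smul_eq_mul, mul_one]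
    rw [h1]
    rfl
  have hgreg : ∀ r : R, r * gR = 0 → r = 0 := by
    intro r hr
    have h1 : φ r = 0 := by
      apply Subtype.ext; apply Subtype.ext
      show (((φ r : 𝔪) : R)) = ((((0 : N') : 𝔪)) : R)
      rw [hφ r, hr]; rfl
    exact φ.map_eq_zero_iff.mp h1
  have hC : C = ⊥ := by
    rw [eq_bot_iff]
    intro c hc
    have hzN : gR • c ∈ N' := by
      have h2 : gR • c = (((c : R) • g' : N') : 𝔪) := by
        apply Subtype.ext
        show gR * (c : R) = (c : R) * gR
        ring
      rw [h2]
      exact Submodule.coe_mem _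
    have h3 : gR • c ∈ N' ⊓ C := ⟨hzN, C.smul_mem _ hc⟩
    rw [hcompl.inf_eq_bot] at h3
    have h4 : gR * (c : R) = 0 := congrArg Subtype.val h3
    have h5 : (c : R) = 0 := hgreg _ (by rwa [mul_comm])
    exact (Submodule.mem_bot R).mpr (Subtype.ext h5)
  have hN'top : N' = ⊤ := by
    have h := hcompl.sup_eq_top
    rwa [hC, sup_bot_eq] at h
  have hprin : ∀ m : 𝔪, ∃ r : R, r * gR = (m : R) := by
    intro m
    have hm : (m : 𝔪) ∈ N' := hN'top ▸ Submodule.mem_top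
    refine ⟨φ.symm ⟨m, hm⟩, ?_⟩
    have h := hφ (φ.symm ⟨m, hm⟩)
    rw [φ.apply_symm_apply] at h
    exact h.symm
  -- lift everything to the power series ring
  have hgRmem : gR ∈ 𝔪 := Submodule.coe_mem _
  have h𝔪map : 𝔪 = Ideal.map (Ideal.Quotient.mk J')
      (Ideal.span ({MvPowerSeries.X 0, MvPowerSeries.X 1} :
        Set (MvPowerSeries (Fin 2) F))) := by
    rw [Ideal.map_span, Set.image_insert_eq, Set.image_singleton]
  rw [h𝔪map] at hgRmem
  obtain ⟨G, hGmem, hGeq⟩ :=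
    (Ideal.mem_map_iff_of_surjective _ Ideal.Quotient.mk_surjective).mp hgRmem
  obtain ⟨rX, hrX⟩ := hprin ⟨X, hX⟩
  obtain ⟨rY, hrY⟩ := hprin ⟨Y, hY⟩
  obtain ⟨r', rfl⟩ := Ideal.Quotient.mk_surjective rX
  obtain ⟨s', rfl⟩ := Ideal.Quotient.mk_surjective rY
  have h0 : MvPowerSeries.X 0 - r' * G ∈ J' := by
    rw [← Ideal.Quotient.eq_zero_iff_mem, map_sub, map_mul, hGeq, hrX, sub_self]
  have h1 : MvPowerSeries.X 1 - s' * G ∈ J' := by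
    rw [← Ideal.Quotient.eq_zero_iff_mem, map_sub, map_mul, hGeq, hrY, sub_self]
  exact not_principal F G r' s' hGmem h0 h1
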